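/- For n = 8, the prime difference graph G_8 contains a Hamilton path from n_1 to n_2 for every pair with 1 ≤ n_1 < n_2 ≤ 8 except the pair (4,5), for which no such Hamilton path exists. -/

import Mathlib

set_option maxRecDepth 100000

/-- `a 0, ..., a (n-1)` is a Hamilton path of `{1,...,n}` with all consecutive
absolute differences prime. -/
def IsPrimeDiffHamPath (n : ℕ) (a : ℕ → ℤ) : Prop :=
  Set.BijOn a (Set.Ico 0 n) (Set.Icc 1 (n : ℤ)) ∧
  (∀ i, i + 1 < n → ((a i - a (i + 1)).natAbs).Prime)

def pdiff (x y : ℤ) : Bool :=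
  let d := (x - y).natAbs
  d == 2 || d == 3 || d == 5 || d == 7

def chk : List ℤ → Bool
  | x :: y :: t => pdiff x y && chk (y :: t)
  | _ => true

theorem key45 : ∀ m ∈ ([1,2,3,6,7,8] : List ℤ).permutations',
    chk (4 :: m ++ [5]) = false := by decide

lemma prime_of_pdiff {x y : ℤ} (h : pdiff x y = true) : ((x - y).natAbs).Prime := by
  simp only [pdiff, Bool.or_eq_true, beq_iff_eq] at h
  obtain ((h | h) | h) | h := h <;> rw [h] <;> norm_num

lemma pdiff_of_prime {x y : ℤ} (hx1 : 1 ≤ x) (hx8 : x ≤ 8) (hy1 : 1 ≤ y) (hy8 : y ≤ 8)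
    (h : ((x - y).natAbs).Prime) : pdiff x y = true := by
  simp only [pdiff, Bool.or_eq_true, beq_iff_eq]
  set d := (x - y).natAbs with hd
  have h2 : 2 ≤ d := h.two_le
  have h7 : d ≤ 7 := by omega
  interval_cases d <;> first | omega | exact absurd h (by norm_num)

lemma chk_prime : ∀ (l : List ℤ), chk l = true → ∀ i, i + 1 < l.length →
    ((l.getD i 0 - l.getD (i+1) 0).natAbs).Prime
  | [] => by intro _ i hi; simp at hi
  | [x] => by intro _ i hi; simp at hi
  | x :: y :: t => by
    intro h i hi
    rw [chk, Bool.and_eq_true] at h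
    match i with
    | 0 => exact prime_of_pdiff h.1
    | Nat.succ i =>
      have := chk_prime (y :: t) h.2 i (by simpa using hi)
      simpa using this

lemma ham_of_list (l : List ℤ) (hlen : l.length = 8) (hnd : l.Nodup)
    (hsub : l ⊆ ([1,2,3,4,5,6,7,8] : List ℤ)) (hchk : chk l = true) :
    IsPrimeDiffHamPath 8 (fun i => l.getD i 0) := by
  have hperm : List.Perm l ([1,2,3,4,5,6,7,8] : List ℤ) :=
    (hnd.subperm hsub).perm_of_length_le (by simp [hlen])
  constructor
  · refine ⟨?_, ?_, ?_⟩
    · intro i hi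
      simp only [Set.mem_Ico] at hi
      have hi8 : i < l.length := by omega
      show l.getD i 0 ∈ _
      rw [List.getD_eq_getElem l 0 hi8]
      have := hsub (l.getElem_mem hi8)
      simp only [List.mem_cons, List.not_mem_nil, or_false] at this
      simp only [Set.mem_Icc]
      rcases this with h|h|h|h|h|h|h|h <;> rw [h] <;> norm_num
    · intro i hi j hj hij
      simp only [Set.mem_Ico] at hi hj
      have hi8 : i < l.length := by omega
      have hj8 : j < l.length := by omega
      replace hij : l.getD i 0 = l.getD j 0 := hij
      rw [List.getD_eq_getElem l 0 hi8, List.getD_eq_getElem l 0 hj8] at hij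
      exact (List.Nodup.getElem_inj_iff hnd).mp hij
    · intro b hb
      simp only [Set.mem_Icc] at hb
      have hbm : b ∈ l := by
        rw [hperm.mem_iff]
        obtain ⟨hb1, hb8⟩ := hb
        interval_cases b <;> simp
      obtain ⟨i, hi, hib⟩ := List.mem_iff_getElem.mp hbm
      refine ⟨i, ?_, ?_⟩
      · simp only [Set.mem_Ico]; omega
      · show l.getD i 0 = b
        rw [List.getD_eq_getElem l 0 hi, hib]
  · intro i hi
    exact chk_prime l hchk i (by omega)

lemma no_path_4_5 (a : ℕ → ℤ) (h : IsPrimeDiffHamPath 8 a)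
    (ha0 : a 0 = 4) (ha7 : a 7 = 5) : False := by
  obtain ⟨⟨hmaps, hinj, hsurj⟩, hpr⟩ := h
  have inj : ∀ i j, i < 8 → j < 8 → a i = a j → i = j := by
    intro i j hi hj hij
    exact hinj (by simp [Set.mem_Ico, hi]) (by simp [Set.mem_Ico, hj]) hij
  have bnd : ∀ i, i < 8 → 1 ≤ a i ∧ a i ≤ 8 := by
    intro i hi
    have := hmaps (show i ∈ Set.Ico 0 8 by simp [Set.mem_Ico, hi])
    simpa [Set.mem_Icc] using this
  set m : List ℤ := [a 1, a 2, a 3, a 4, a 5, a 6] with hm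
  have hmmap : m = (List.range 6).map (fun k => a (k + 1)) := rfl
  have hnd : m.Nodup := by
    rw [hmmap]
    refine List.Nodup.map_on ?_ List.nodup_range
    intro x hx y hy hxy
    simp only [List.mem_range] at hx hy
    have := inj (x + 1) (y + 1) (by omega) (by omega) hxy
    omega
  have hsub : m ⊆ ([1,2,3,6,7,8] : List ℤ) := by
    intro x hx
    rw [hmmap] at hx
    simp only [List.mem_map, List.mem_range] at hx
    obtain ⟨k, hk, rfl⟩ := hx
    have hb := bnd (k + 1) (by omega)
    have h4 : a (k + 1) ≠ 4 := by
      intro hc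
      have := inj (k + 1) 0 (by omega) (by omega) (by rw [hc, ha0])
      omega
    have h5 : a (k + 1) ≠ 5 := by
      intro hc
      have := inj (k + 1) 7 (by omega) (by omega) (by rw [hc, ha7])
      omega
    simp only [List.mem_cons, List.not_mem_nil, or_false]
    omega
  have hperm : List.Perm m ([1,2,3,6,7,8] : List ℤ) :=
    (hnd.subperm hsub).perm_of_length_le (by simp [hm])
  have hmem : m ∈ ([1,2,3,6,7,8] : List ℤ).permutations' :=
    List.mem_permutations'.mpr hperm
  have hfalse := key45 m hmem
  have heq : (4 : ℤ) :: m ++ [5] = [a 0, a 1, a 2, a 3, a 4, a 5, a 6, a 7] := by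
    rw [hm, ← ha0, ← ha7]; rfl
  have htrue : chk ((4 : ℤ) :: m ++ [5]) = true := by
    rw [heq]
    have pd : ∀ i, i + 1 < 8 → pdiff (a i) (a (i + 1)) = true := by
      intro i hi
      obtain ⟨h1, h2⟩ := bnd i (by omega)
      obtain ⟨h3, h4⟩ := bnd (i + 1) (by omega)
      exact pdiff_of_prime h1 h2 h3 h4 (hpr i hi)
    simp only [chk, Bool.and_eq_true]
    exact ⟨pd 0 (by omega), pd 1 (by omega), pd 2 (by omega), pd 3 (by omega),
      pd 4 (by omega), pd 5 (by omega), pd 6 (by omega), trivial⟩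
  rw [htrue] at hfalse
  exact absurd hfalse (by simp)

theorem prime_diff_ham_path_G8_characterization (n₁ n₂ : ℕ)
    (h1 : 1 ≤ n₁) (h12 : n₁ < n₂) (h2 : n₂ ≤ 8) :
    (∃ a : ℕ → ℤ, IsPrimeDiffHamPath 8 a ∧ a 0 = n₁ ∧ a 7 = n₂) ↔
      (n₁, n₂) ≠ (4, 5) := by
  constructor
  · rintro ⟨a, hham, ha0, ha7⟩ h45
    rw [Prod.mk.injEq] at h45
    obtain ⟨rfl, rfl⟩ := h45
    exact no_path_4_5 a hham (by exact_mod_cast ha0) (by exact_mod_cast ha7)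
  · intro hne
    have h7 : n₁ ≤ 7 := by omega
    interval_cases n₁ <;> interval_cases n₂
    · exact ⟨_, ham_of_list [1,3,5,8,6,4,7,2] rfl (by decide) (by decide) (by decide), by norm_num, by norm_num⟩
    · exact ⟨_, ham_of_list [1,4,2,7,5,8,6,3] rfl (by decide) (by decide) (by decide), by norm_num, by norm_num⟩
    · exact ⟨_, ham_of_list [1,3,6,8,5,2,7,4] rfl (by decide) (by decide) (by decide), by norm_num, by norm_num⟩
    · exact ⟨_, ham_of_list [1,3,8,6,4,2,7,5] rfl (by decide) (by decide) (by decide), by norm_num, by norm_num⟩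
    · exact ⟨_, ham_of_list [1,3,8,5,2,7,4,6] rfl (by decide) (by decide) (by decide), by norm_num, by norm_num⟩
    · exact ⟨_, ham_of_list [1,3,5,8,6,4,2,7] rfl (by decide) (by decide) (by decide), by norm_num, by norm_num⟩
    · exact ⟨_, ham_of_list [1,3,5,2,7,4,6,8] rfl (by decide) (by decide) (by decide), by norm_num, by norm_num⟩
    · exact ⟨_, ham_of_list [2,4,7,5,8,1,6,3] rfl (by decide) (by decide) (by decide), by norm_num, by norm_num⟩
    · exact ⟨_, ham_of_list [2,7,5,3,1,8,6,4] rfl (by decide) (by decide) (by decide), by norm_num, by norm_num⟩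
    · exact ⟨_, ham_of_list [2,7,4,1,3,6,8,5] rfl (by decide) (by decide) (by decide), by norm_num, by norm_num⟩
    · exact ⟨_, ham_of_list [2,4,7,5,3,1,8,6] rfl (by decide) (by decide) (by decide), by norm_num, by norm_num⟩
    · exact ⟨_, ham_of_list [2,4,1,3,6,8,5,7] rfl (by decide) (by decide) (by decide), by norm_num, by norm_num⟩
    · exact ⟨_, ham_of_list [2,4,7,5,3,1,6,8] rfl (by decide) (by decide) (by decide), by norm_num, by norm_num⟩
    · exact ⟨_, ham_of_list [3,1,6,8,5,2,7,4] rfl (by decide) (by decide) (by decide), by norm_num, by norm_num⟩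
    · exact ⟨_, ham_of_list [3,1,8,6,4,2,7,5] rfl (by decide) (by decide) (by decide), by norm_num, by norm_num⟩
    · exact ⟨_, ham_of_list [3,1,4,2,7,5,8,6] rfl (by decide) (by decide) (by decide), by norm_num, by norm_num⟩
    · exact ⟨_, ham_of_list [3,1,4,6,8,5,2,7] rfl (by decide) (by decide) (by decide), by norm_num, by norm_num⟩
    · exact ⟨_, ham_of_list [3,1,6,4,2,7,5,8] rfl (by decide) (by decide) (by decide), by norm_num, by norm_num⟩
    · exact absurd rfl hne
    · exact ⟨_, ham_of_list [4,2,7,5,3,1,8,6] rfl (by decide) (by decide) (by decide), by norm_num, by norm_num⟩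
    · exact ⟨_, ham_of_list [4,1,3,6,8,5,2,7] rfl (by decide) (by decide) (by decide), by norm_num, by norm_num⟩
    · exact ⟨_, ham_of_list [4,2,7,5,3,1,6,8] rfl (by decide) (by decide) (by decide), by norm_num, by norm_num⟩
    · exact ⟨_, ham_of_list [5,2,7,4,1,3,8,6] rfl (by decide) (by decide) (by decide), by norm_num, by norm_num⟩
    · exact ⟨_, ham_of_list [5,3,1,8,6,4,2,7] rfl (by decide) (by decide) (by decide), by norm_num, by norm_num⟩
    · exact ⟨_, ham_of_list [5,2,7,4,1,3,6,8] rfl (by decide) (by decide) (by decide), by norm_num, by norm_num⟩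
    · exact ⟨_, ham_of_list [6,1,3,8,5,2,4,7] rfl (by decide) (by decide) (by decide), by norm_num, by norm_num⟩
    · exact ⟨_, ham_of_list [6,1,4,2,7,5,3,8] rfl (by decide) (by decide) (by decide), by norm_num, by norm_num⟩
    · exact ⟨_, ham_of_list [7,2,4,1,6,3,5,8] rfl (by decide) (by decide) (by decide), by norm_num, by norm_num⟩
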